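/- (Positive-sets-disjointness superadditivity) Let (X, 𝒜, μ) be a monotone measure space and f, g : X → [0, ∞] measurable. If the positive sets of f and g are disjoint, i.e. {x : f(x) > 0} ∩ {x : g(x) > 0} = ∅, then ∫^pan (f+g) dμ ≥ ∫^pan f dμ + ∫^pan g dμ. -/

import Mathlib

open Set Filter
open scoped ENNReal NNReal Topology

variable {X : Type*}

/-- A monotone measure: vanishes on the empty set, positive on the whole space,
and monotone on measurable sets. -/
structure MonotoneMeasure [MeasurableSpace X] (mu : Set X → ℝ≥0∞) : Prop where
  empty : mu ∅ = 0
  univ_pos : 0 < mu Set.univ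
  mono : ∀ ⦃A B : Set X⦄, MeasurableSet A → MeasurableSet B → A ⊆ B → mu A ≤ mu B

/-- A finite measurable partition of `X`. -/
def IsPanPartition [MeasurableSpace X] {n : ℕ} (A : Fin n → Set X) : Prop :=
  (∀ i, MeasurableSet (A i)) ∧ Pairwise (Function.onFun Disjoint A) ∧ (⋃ i, A i) = Set.univ

/-- The `(+,·)`-based pan-integral of a nonnegative function on `X`. -/
noncomputable def panIntegral [MeasurableSpace X] (mu : Set X → ℝ≥0∞) (f : X → ℝ≥0∞) : ℝ≥0∞ :=
  ⨆ (n : ℕ) (A : Fin n → Set X) (_ : IsPanPartition A) (lam : Fin n → ℝ≥0)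
    (_ : ∀ x, ∑ i, Set.indicator (A i) (fun _ => (lam i : ℝ≥0∞)) x ≤ f x),
    ∑ i, (lam i : ℝ≥0∞) * mu (A i)

/-- The pan-integral of `f` on a set `A`, i.e. the pan-integral of `f·χ_A` on `X`. -/
noncomputable def panIntegralOn [MeasurableSpace X] (mu : Set X → ℝ≥0∞) (f : X → ℝ≥0∞)
    (A : Set X) : ℝ≥0∞ :=
  panIntegral mu (A.indicator f)

/-- Subadditivity of a set function. -/
def PanSubadditive [MeasurableSpace X] (mu : Set X → ℝ≥0∞) : Prop :=
  ∀ ⦃A B : Set X⦄, MeasurableSet A → MeasurableSet B → mu (A ∪ B) ≤ mu A + mu B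

/-- Null-additivity of a set function. -/
def PanNullAdditive [MeasurableSpace X] (mu : Set X → ℝ≥0∞) : Prop :=
  ∀ ⦃A B : Set X⦄, MeasurableSet A → MeasurableSet B → mu B = 0 → mu (A ∪ B) = mu A

/-- Continuity from below of a set function. -/
def PanContinuousFromBelow [MeasurableSpace X] (mu : Set X → ℝ≥0∞) : Prop :=
  ∀ E : ℕ → Set X, (∀ n, MeasurableSet (E n)) → Monotone E →
    Filter.Tendsto (fun n => mu (E n)) Filter.atTop (nhds (mu (⋃ n, E n)))

/-- A real-valued function is pan-integrable if the pan-integrals of its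
positive and negative parts are both finite. -/
def PanIntegrable [MeasurableSpace X] (mu : Set X → ℝ≥0∞) (f : X → ℝ) : Prop :=
  panIntegral mu (fun x => ENNReal.ofReal (f x)) < ⊤ ∧
    panIntegral mu (fun x => ENNReal.ofReal (-f x)) < ⊤

/-- The symmetric pan-integral of a real-valued function:
`∫ f⁺ dμ − ∫ f⁻ dμ`. -/
noncomputable def panIntegralReal [MeasurableSpace X] (mu : Set X → ℝ≥0∞) (f : X → ℝ) : ℝ :=
  (panIntegral mu (fun x => ENNReal.ofReal (f x))).toReal -
    (panIntegral mu (fun x => ENNReal.ofReal (-f x))).toReal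

/-- The `‖·‖_{μ,p}` functional: `(∫_E^pan |f|^p dμ)^(1/p)`. -/
noncomputable def panNorm [MeasurableSpace X] (mu : Set X → ℝ≥0∞) (E : Set X) (p : ℝ)
    (f : X → ℝ) : ℝ≥0∞ :=
  (panIntegralOn mu (fun x => ENNReal.ofReal (|f x| ^ p)) E) ^ (1 / p)

section aux
variable [MeasurableSpace X]

lemma le_panIntegral_of_partition {ι : Type*} [Fintype ι] (mu : Set X → ℝ≥0∞) (f : X → ℝ≥0∞)
    (A : ι → Set X) (lam : ι → ℝ≥0)
    (hmeas : ∀ i, MeasurableSet (A i)) (hdis : Pairwise (Function.onFun Disjoint A))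
    (hcov : (⋃ i, A i) = Set.univ)
    (hle : ∀ x, ∑ i, (A i).indicator (fun _ => (lam i : ℝ≥0∞)) x ≤ f x) :
    ∑ i, (lam i : ℝ≥0∞) * mu (A i) ≤ panIntegral mu f := by
  classical
  set e := Fintype.equivFin ι with he
  have hpart : IsPanPartition (fun k : Fin (Fintype.card ι) => A (e.symm k)) := by
    refine ⟨fun k => hmeas _, ?_, ?_⟩
    · intro k k' hkk'
      exact hdis (e.symm.injective.ne hkk')
    · rw [e.symm.surjective.iUnion_comp]; exact hcov
  refine le_iSup_of_le (Fintype.card ι) ?_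
  refine le_iSup_of_le (fun k => A (e.symm k)) ?_
  refine le_iSup_of_le hpart ?_
  refine le_iSup_of_le (fun k => lam (e.symm k)) ?_
  refine le_iSup_of_le ?_ ?_
  · intro x
    rw [e.symm.sum_comp (fun i => (A i).indicator (fun _ => (lam i : ℝ≥0∞)) x)]
    exact hle x
  · exact le_of_eq (e.symm.sum_comp fun i => (lam i : ℝ≥0∞) * mu (A i)).symm

def PanData (f : X → ℝ≥0∞) : Type _ :=
  {p : Σ n : ℕ, (Fin n → Set X) × (Fin n → ℝ≥0) //
    IsPanPartition p.2.1 ∧ ∀ x, ∑ i, (p.2.1 i).indicator (fun _ => ((p.2.2 i : ℝ≥0∞))) x ≤ f x}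

instance (f : X → ℝ≥0∞) : Nonempty (PanData f) := by
  refine ⟨⟨⟨1, fun _ => Set.univ, fun _ => 0⟩, ⟨fun _ => MeasurableSet.univ,
    Subsingleton.pairwise, by simp [Set.iUnion_const]⟩, fun x => by simp⟩⟩

lemma panIntegral_eq_iSup (mu : Set X → ℝ≥0∞) (f : X → ℝ≥0∞) :
    panIntegral mu f = ⨆ p : PanData f, ∑ i, (p.1.2.2 i : ℝ≥0∞) * mu (p.1.2.1 i) := by
  apply le_antisymm
  · rw [panIntegral]
    refine iSup_le fun n => iSup_le fun A => iSup_le fun hA => iSup_le fun lam =>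
      iSup_le fun hlam => ?_
    exact le_iSup_of_le (⟨⟨n, A, lam⟩, hA, hlam⟩ : PanData f) le_rfl
  · refine iSup_le fun p => ?_
    rw [panIntegral]
    exact le_iSup_of_le p.1.1 (le_iSup_of_le p.1.2.1 (le_iSup_of_le p.2.1
      (le_iSup_of_le p.1.2.2 (le_iSup_of_le p.2.2 le_rfl))))

lemma pos_subset_of_le {n : ℕ} (f : X → ℝ≥0∞) (A : Fin n → Set X) (lam : Fin n → ℝ≥0)
    (hlam : ∀ x, ∑ i, (A i).indicator (fun _ => ((lam i : ℝ≥0∞))) x ≤ f x)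
    (i : Fin n) (hi : lam i ≠ 0) : A i ⊆ {x | 0 < f x} := by
  intro x hx
  have h1 : (lam i : ℝ≥0∞) ≤ ∑ k, (A k).indicator (fun _ => ((lam k : ℝ≥0∞))) x := by
    have := Finset.single_le_sum
      (f := fun k => (A k).indicator (fun _ => ((lam k : ℝ≥0∞))) x)
      (fun k _ => zero_le) (Finset.mem_univ i)
    simpa [Set.indicator_of_mem hx] using this
  have h2 : (lam i : ℝ≥0∞) ≤ f x := h1.trans (hlam x)
  exact lt_of_lt_of_le (by exact_mod_cast pos_iff_ne_zero.mpr hi) h2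

end aux

theorem panIntegral_superadditive_of_disjoint_pos_sets [MeasurableSpace X]
    (mu : Set X → ℝ≥0∞) (hmu : MonotoneMeasure mu)
    (f g : X → ℝ≥0∞) (hf : Measurable f) (hg : Measurable g)
    (hdisj : {x | 0 < f x} ∩ {x | 0 < g x} = ∅) :
    panIntegral mu f + panIntegral mu g ≤ panIntegral mu (fun x => f x + g x) := by
  classical
  have hFG : Disjoint {x | 0 < f x} {x | 0 < g x} := Set.disjoint_iff_inter_eq_empty.mpr hdisj
  rw [panIntegral_eq_iSup mu f, panIntegral_eq_iSup mu g]
  refine ENNReal.iSup_add_iSup_le fun p q => ?_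
  obtain ⟨⟨n, A, lam⟩, hApart, hAlam⟩ := p
  obtain ⟨⟨m, B, kap⟩, hBpart, hBkap⟩ := q
  dsimp only at *
  -- positive-weight sets sit inside the positivity sets
  have hApos : ∀ i, lam i ≠ 0 → A i ⊆ {x | 0 < f x} := pos_subset_of_le f A lam hAlam
  have hBpos : ∀ j, kap j ≠ 0 → B j ⊆ {x | 0 < g x} := pos_subset_of_le g B kap hBkap
  -- the combined partition
  set C0 : Fin n ⊕ Fin m → Set X :=
    Sum.elim (fun i => if lam i = 0 then ∅ else A i) (fun j => if kap j = 0 then ∅ else B j)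
    with hC0
  set C : Option (Fin n ⊕ Fin m) → Set X := fun o => o.elim (⋃ k, C0 k)ᶜ C0 with hC
  set nu : Option (Fin n ⊕ Fin m) → ℝ≥0 := fun o => o.elim 0 (Sum.elim lam kap) with hnu
  have hsubA : ∀ i, (if lam i = 0 then (∅ : Set X) else A i) ⊆ A i := by
    intro i; split_ifs <;> simp
  have hsubB : ∀ j, (if kap j = 0 then (∅ : Set X) else B j) ⊆ B j := by
    intro j; split_ifs <;> simp
  have hC0meas : ∀ k, MeasurableSet (C0 k) := by
    rintro (i | j) <;> dsimp [C0] <;> split_ifs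
    exacts [MeasurableSet.empty, hApart.1 i, MeasurableSet.empty, hBpart.1 j]
  have hC0disj : Pairwise (Function.onFun Disjoint C0) := by
    rintro (i | j) (i' | j') hkk'
    · exact (hApart.2.1 (fun h => hkk' (congrArg Sum.inl h))).mono (hsubA i) (hsubA i')
    · dsimp [Function.onFun, C0]
      by_cases h1 : lam i = 0
      · simp [h1]
      by_cases h2 : kap j' = 0
      · simp [h2]
      simp only [if_neg h1, if_neg h2]
      exact hFG.mono (hApos i h1) (hBpos j' h2)
    · dsimp [Function.onFun, C0]
      by_cases h1 : kap j = 0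
      · simp [h1]
      by_cases h2 : lam i' = 0
      · simp [h2]
      simp only [if_neg h1, if_neg h2]
      exact (hFG.mono (hApos i' h2) (hBpos j h1)).symm
    · exact (hBpart.2.1 (fun h => hkk' (congrArg Sum.inr h))).mono (hsubB j) (hsubB j')
  have hCmeas : ∀ o, MeasurableSet (C o) := by
    rintro (_ | k)
    · exact (MeasurableSet.iUnion fun k => hC0meas k).compl
    · exact hC0meas k
  have hCdisj : Pairwise (Function.onFun Disjoint C) := by
    rintro (_ | k) (_ | k') hoo'
    · exact absurd rfl hoo'
    · exact disjoint_compl_left.mono_right (Set.subset_iUnion C0 k')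
    · exact (disjoint_compl_left.mono_right (Set.subset_iUnion C0 k)).symm
    · exact hC0disj (fun h => hoo' (congrArg some h))
  have hCcov : (⋃ o, C o) = Set.univ := by
    rw [Set.iUnion_option]
    exact Set.compl_union_self _
  have hCle : ∀ x, ∑ o, (C o).indicator (fun _ => ((nu o : ℝ≥0∞))) x ≤ f x + g x := by
    intro x
    rw [Fintype.sum_option, Fintype.sum_sum_type]
    have h0 : (C none).indicator (fun _ => ((nu none : ℝ≥0∞))) x = 0 := by
      simp [nu]
    rw [h0, zero_add]
    have hfle : ∑ i, (C (some (Sum.inl i))).indicator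
        (fun _ => ((nu (some (Sum.inl i)) : ℝ≥0∞))) x ≤ f x := by
      refine le_trans (Finset.sum_le_sum fun i _ => ?_) (hAlam x)
      exact Set.indicator_le_indicator_of_subset (hsubA i) (fun _ => zero_le) x
    have hgle : ∑ j, (C (some (Sum.inr j))).indicator
        (fun _ => ((nu (some (Sum.inr j)) : ℝ≥0∞))) x ≤ g x := by
      refine le_trans (Finset.sum_le_sum fun j _ => ?_) (hBkap x)
      exact Set.indicator_le_indicator_of_subset (hsubB j) (fun _ => zero_le) x
    exact add_le_add hfle hgle
  have hkey := le_panIntegral_of_partition mu (fun x => f x + g x) C nu hCmeas hCdisj hCcov hCle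
  refine le_trans (le_of_eq ?_) hkey
  rw [Fintype.sum_option, Fintype.sum_sum_type]
  have h0 : ((nu none : ℝ≥0∞)) * mu (C none) = 0 := by simp [nu]
  rw [h0, zero_add]
  congr 1
  · refine Finset.sum_congr rfl fun i _ => ?_
    by_cases h1 : lam i = 0
    · simp [nu, C, C0, h1]
    · simp [nu, C, C0, h1]
  · refine Finset.sum_congr rfl fun j _ => ?_
    by_cases h1 : kap j = 0
    · simp [nu, C, C0, h1]
    · simp [nu, C, C0, h1]
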